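/- Define x̄₁(t) = −sech²t·tanh t and x̄₂(t) = sech²t for t ∈ ℝ. Then x̄₁′(t) = 2 x̄₂(t) − 3 x̄₂(t)² and x̄₂′(t) = 2 x̄₁(t) for all t ∈ ℝ; moreover (x̄₁(0), x̄₂(0)) = (0,1), the identity x̄₁(t)² = x̄₂(t)²·(1 − x̄₂(t)) holds for all t ∈ ℝ, and (x̄₁(t), x̄₂(t)) → (0,0) as t → ±∞. -/

import Mathlib

open Real Filter

lemma abs_sinh_le_cosh (t : ℝ) : |Real.sinh t| ≤ Real.cosh t := by
  have h := Real.cosh_sq t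
  have : Real.sinh t ^ 2 ≤ Real.cosh t ^ 2 := by nlinarith
  rw [abs_le]
  constructor <;> nlinarith [Real.cosh_pos t, sq_nonneg (Real.sinh t - Real.cosh t),
    sq_nonneg (Real.sinh t + Real.cosh t)]

lemma eddy_tendsto (l : Filter ℝ) (h : Tendsto Real.cosh l atTop) :
    Tendsto (fun t : ℝ => (-((1 / Real.cosh t) ^ 2 * Real.tanh t), (1 / Real.cosh t) ^ 2))
      l (nhds ((0 : ℝ), (0 : ℝ))) := by
  have hinv : Tendsto (fun t => (1 / Real.cosh t)) l (nhds 0) := by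
    simp only [one_div]; exact h.inv_tendsto_atTop
  have h2 : Tendsto (fun t : ℝ => (1 / Real.cosh t) ^ 2) l (nhds 0) := by
    have := hinv.pow 2
    simpa using this
  have h1 : Tendsto (fun t : ℝ => -((1 / Real.cosh t) ^ 2 * Real.tanh t)) l (nhds 0) := by
    refine squeeze_zero_norm (fun t => ?_) h2
    have hc := Real.cosh_pos t
    have htanh : |Real.tanh t| ≤ 1 := by
      rw [Real.tanh_eq_sinh_div_cosh, abs_div, abs_of_pos hc, div_le_one hc]
      exact abs_sinh_le_cosh t
    have hnn : (0:ℝ) ≤ (1 / Real.cosh t) ^ 2 := sq_nonneg _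
    calc ‖-((1 / Real.cosh t) ^ 2 * Real.tanh t)‖
        = (1 / Real.cosh t) ^ 2 * |Real.tanh t| := by
          rw [norm_neg, norm_mul, Real.norm_eq_abs, Real.norm_eq_abs, abs_of_nonneg hnn]
      _ ≤ (1 / Real.cosh t) ^ 2 * 1 := by exact mul_le_mul_of_nonneg_left htanh hnn
      _ = (1 / Real.cosh t) ^ 2 := mul_one _
  exact h1.prodMk_nhds h2

lemma cosh_tendsto_atTop : Tendsto Real.cosh atTop atTop := by
  apply tendsto_atTop_mono (fun x => ?_) (Real.tendsto_exp_atTop.atTop_div_const two_pos)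
  rw [Real.cosh_eq]
  have := (Real.exp_pos (-x)).le
  linarith

lemma cosh_tendsto_atBot : Tendsto Real.cosh atBot atTop := by
  have h : Tendsto (fun x : ℝ => Real.exp (-x) / 2) atBot atTop :=
    (Real.tendsto_exp_atTop.comp tendsto_neg_atBot_atTop).atTop_div_const two_pos
  apply tendsto_atTop_mono (fun x => ?_) h
  rw [Real.cosh_eq]
  have := (Real.exp_pos x).le
  linarith

/-- **The homoclinic orbit of the kinematic eddy model** (Section 8 of the paper):
`x̄₁(t) = −sech²t tanh t`, `x̄₂(t) = sech²t` solves `x̄₁′ = 2x̄₂ − 3x̄₂²`, `x̄₂′ = 2x̄₁`,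
passes through `(0,1)` at `t = 0`, satisfies `x̄₁² = x̄₂²(1 − x̄₂)`, and tends to `(0,0)`
as `t → ±∞`. -/
theorem eddy_homoclinic :
    (∀ t : ℝ, HasDerivAt (fun s : ℝ => -((1 / Real.cosh s) ^ 2 * Real.tanh s))
      (2 * (1 / Real.cosh t) ^ 2 - 3 * ((1 / Real.cosh t) ^ 2) ^ 2) t) ∧
    (∀ t : ℝ, HasDerivAt (fun s : ℝ => (1 / Real.cosh s) ^ 2)
      (2 * (-((1 / Real.cosh t) ^ 2 * Real.tanh t))) t) ∧
    (-((1 / Real.cosh (0 : ℝ)) ^ 2 * Real.tanh (0 : ℝ)) = 0 ∧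
      (1 / Real.cosh (0 : ℝ)) ^ 2 = 1) ∧
    (∀ t : ℝ, (-((1 / Real.cosh t) ^ 2 * Real.tanh t)) ^ 2 =
      ((1 / Real.cosh t) ^ 2) ^ 2 * (1 - (1 / Real.cosh t) ^ 2)) ∧
    Tendsto (fun t : ℝ => (-((1 / Real.cosh t) ^ 2 * Real.tanh t), (1 / Real.cosh t) ^ 2))
      atTop (nhds ((0 : ℝ), (0 : ℝ))) ∧
    Tendsto (fun t : ℝ => (-((1 / Real.cosh t) ^ 2 * Real.tanh t), (1 / Real.cosh t) ^ 2))
      atBot (nhds ((0 : ℝ), (0 : ℝ))) := by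
  have hcne : ∀ t : ℝ, Real.cosh t ≠ 0 := fun t => (Real.cosh_pos t).ne'
  refine ⟨?_, ?_, ⟨?_, ?_⟩, ?_, eddy_tendsto _ cosh_tendsto_atTop,
    eddy_tendsto _ cosh_tendsto_atBot⟩
  · intro t
    have hD : HasDerivAt (fun s : ℝ => -((1 / Real.cosh s) ^ 2 * (Real.sinh s / Real.cosh s)))
        (-((2 * (1 / Real.cosh t) * (-(Real.sinh t) / Real.cosh t ^ 2)) *
            (Real.sinh t / Real.cosh t) +
          (1 / Real.cosh t) ^ 2 *
            ((Real.cosh t * Real.cosh t - Real.sinh t * Real.sinh t) / Real.cosh t ^ 2))) t := by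
      have hsech : HasDerivAt (fun s : ℝ => 1 / Real.cosh s)
          ((0 * Real.cosh t - 1 * Real.sinh t) / Real.cosh t ^ 2) t :=
        (hasDerivAt_const t 1).div (Real.hasDerivAt_cosh t) (hcne t)
      have hsech2 := hsech.fun_pow 2
      have htanh : HasDerivAt (fun s : ℝ => Real.sinh s / Real.cosh s)
          ((Real.cosh t * Real.cosh t - Real.sinh t * Real.sinh t) / Real.cosh t ^ 2) t :=
        (Real.hasDerivAt_sinh t).div (Real.hasDerivAt_cosh t) (hcne t)
      have := (hsech2.mul htanh).neg
      refine this.congr_deriv ?_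
      ring
    have heq : (fun s : ℝ => -((1 / Real.cosh s) ^ 2 * (Real.sinh s / Real.cosh s))) =
        (fun s : ℝ => -((1 / Real.cosh s) ^ 2 * Real.tanh s)) := by
      funext s; rw [Real.tanh_eq_sinh_div_cosh]
    rw [heq] at hD
    convert hD using 1
    have h1 : Real.sinh t ^ 2 = Real.cosh t ^ 2 - 1 := by
      have := Real.cosh_sq t; linarith
    field_simp
    linear_combination (-3) * h1
  · intro t
    have hsech : HasDerivAt (fun s : ℝ => 1 / Real.cosh s)
        ((0 * Real.cosh t - 1 * Real.sinh t) / Real.cosh t ^ 2) t :=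
      (hasDerivAt_const t 1).div (Real.hasDerivAt_cosh t) (hcne t)
    have := hsech.fun_pow 2
    refine this.congr_deriv ?_
    rw [Real.tanh_eq_sinh_div_cosh]
    push_cast
    field_simp
    ring
  · simp
  · simp
  · intro t
    have h1 : Real.sinh t ^ 2 = Real.cosh t ^ 2 - 1 := by
      have := Real.cosh_sq t; linarith
    rw [Real.tanh_eq_sinh_div_cosh]
    field_simp
    nlinarith [h1, Real.cosh_pos t]
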